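/- Let (a,b) be a toroidal interval in [0,1) and define f_{(a,b)}(x) = log(max{len(a,x), len(x,b)} / len(a,b)) for x ∈ (a,b) and f_{(a,b)}(x) = 0 otherwise, where len denotes toroidal length. Then ∫_0^1 f_{(a,b)}(x) dx = (log 2 − 1)·len(a,b). -/

import Mathlib

open scoped Classical

/-- Toroidal length of the toroidal interval `(a,b)` on `ℝ/ℤ` (for `a,b ∈ [0,1)`). -/
noncomputable def tlen (a b : ℝ) : ℝ := if a ≤ b then b - a else b - a + 1

/-- Membership of `x` in the toroidal interval `(a,b)`:
the usual interval if `a < b`, and `(a,1] ∪ [0,b)` if `a > b`. -/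
def tmem (x a b : ℝ) : Prop := if a < b then a < x ∧ x < b else a < x ∨ x < b

lemma max_pos_aux {a b x : ℝ} (h : a < b) : 0 < max (x - a) (b - x) := by
  rcases le_or_gt (x - a) 0 with h1 | h1
  · exact lt_max_of_lt_right (by linarith)
  · exact lt_max_of_lt_left h1

lemma contOn (a b c d : ℝ) (h : a < b) :
    IntervalIntegrable (fun x => Real.log (max (x - a) (b - x))) MeasureTheory.volume c d := by
  apply ContinuousOn.intervalIntegrable
  apply ContinuousOn.log
  · exact ((continuous_id.sub continuous_const).max
      (continuous_const.sub continuous_id)).continuousOn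
  · intro x _; exact ne_of_gt (max_pos_aux h)

lemma gInt (a b c d : ℝ) (h : a < b) :
    IntervalIntegrable (fun x => Real.log (max (x - a) (b - x) / (b - a)))
      MeasureTheory.volume c d := by
  apply ContinuousOn.intervalIntegrable
  apply ContinuousOn.log
  · exact (((continuous_id.sub continuous_const).max
      (continuous_const.sub continuous_id)).div_const _).continuousOn
  · intro x _
    exact ne_of_gt (div_pos (max_pos_aux h) (by linarith))

lemma intInt_congr {f g : ℝ → ℝ} {a b : ℝ} (h : Set.EqOn f g (Set.uIcc a b))
    (hg : IntervalIntegrable g MeasureTheory.volume a b) :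
    IntervalIntegrable f MeasureTheory.volume a b := by
  apply hg.congr
  intro x hx
  exact (h (Set.uIoc_subset_uIcc hx)).symm

lemma core (a b : ℝ) (h : a < b) :
    ∫ x in a..b, Real.log (max (x - a) (b - x) / (b - a)) = (Real.log 2 - 1) * (b - a) := by
  have hL : (0:ℝ) < b - a := by linarith
  set L := b - a with hLdef
  set m := (a + b) / 2 with hm
  have ham : a < m := by rw [hm]; linarith
  have hmb : m < b := by rw [hm]; linarith
  have h1 : (∫ x in a..b, Real.log (max (x - a) (b - x) / L))
      = (∫ x in a..b, Real.log (max (x - a) (b - x))) - (b - a) * Real.log L := by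
    have : (∫ x in a..b, Real.log (max (x - a) (b - x) / L))
        = ∫ x in a..b, (Real.log (max (x - a) (b - x)) - Real.log L) := by
      apply intervalIntegral.integral_congr
      intro x _
      exact Real.log_div (ne_of_gt (max_pos_aux h)) (ne_of_gt hL)
    rw [this, intervalIntegral.integral_sub (contOn a b a b h)
      (intervalIntegrable_const), intervalIntegral.integral_const, smul_eq_mul]
  have hsplit : (∫ x in a..b, Real.log (max (x - a) (b - x)))
      = (∫ x in a..m, Real.log (max (x - a) (b - x)))
        + ∫ x in m..b, Real.log (max (x - a) (b - x)) :=
    (intervalIntegral.integral_add_adjacent_intervals (contOn a b a m h)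
      (contOn a b m b h)).symm
  have hIa : (∫ x in a..m, Real.log (max (x - a) (b - x)))
      = ∫ x in (b - m)..(b - a), Real.log x := by
    rw [← intervalIntegral.integral_comp_sub_left (fun x => Real.log x) b]
    apply intervalIntegral.integral_congr
    intro x hx
    rw [Set.uIcc_of_le (le_of_lt ham)] at hx
    have : x - a ≤ b - x := by
      have := hx.2; rw [hm] at this; linarith
    simp only []; rw [max_eq_right this]
  have hIb : (∫ x in m..b, Real.log (max (x - a) (b - x)))
      = ∫ x in (m - a)..(b - a), Real.log x := by
    rw [← intervalIntegral.integral_comp_sub_right (fun x => Real.log x) a]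
    apply intervalIntegral.integral_congr
    intro x hx
    rw [Set.uIcc_of_le (le_of_lt hmb)] at hx
    have : b - x ≤ x - a := by
      have := hx.1; rw [hm] at this; linarith
    simp only []; rw [max_eq_left this]
  have hbm : b - m = L / 2 := by rw [hm, hLdef]; ring
  have hma : m - a = L / 2 := by rw [hm, hLdef]; ring
  have hlog : (∫ x in (L/2)..L, Real.log x)
      = L * Real.log L - (L/2) * Real.log (L/2) - L + L/2 := by
    rw [integral_log]
  have hlog2 : Real.log (L / 2) = Real.log L - Real.log 2 :=
    Real.log_div (ne_of_gt hL) (by norm_num)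
  rw [h1, hsplit, hIa, hIb, hbm, hma, ← hLdef, hlog, hlog2]
  ring

/-- `∫_0^1 f_{(a,b)}(x) dx = (log 2 − 1)·len(a,b)` where
`f_{(a,b)}(x) = log(max{len(a,x), len(x,b)}/len(a,b))` on `(a,b)` and `0` elsewhere. -/
theorem stmt_18 (a b : ℝ) (ha : a ∈ Set.Ico (0:ℝ) 1) (hb : b ∈ Set.Ico (0:ℝ) 1)
    (hab : a ≠ b) :
    (∫ x in (0:ℝ)..1,
        (if tmem x a b then Real.log (max (tlen a x) (tlen x b) / tlen a b) else 0))
      = (Real.log 2 - 1) * tlen a b := by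
  obtain ⟨ha0, ha1⟩ := ha
  obtain ⟨hb0, hb1⟩ := hb
  set F : ℝ → ℝ := fun x =>
    if tmem x a b then Real.log (max (tlen a x) (tlen x b) / tlen a b) else 0 with hF
  rcases lt_or_gt_of_ne hab with h | h
  · -- a < b
    have htl : tlen a b = b - a := if_pos h.le
    set g : ℝ → ℝ := fun x => Real.log (max (x - a) (b - x) / (b - a)) with hg
    have hmid : Set.EqOn F g (Set.uIcc a b) := by
      intro x hx
      rw [Set.uIcc_of_le h.le] at hx
      obtain ⟨hxa, hxb⟩ := hx
      by_cases hm : tmem x a b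
      · have hm' : a < x ∧ x < b := by simpa [tmem, if_pos h] using hm
        have t1 : tlen a x = x - a := if_pos hxa
        have t2 : tlen x b = b - x := if_pos hxb
        simp only [hF, hg, if_pos hm, t1, t2, htl]
      · have hm' : ¬(a < x ∧ x < b) := by simpa [tmem, if_pos h] using hm
        have : x = a ∨ x = b := by
          rcases lt_or_eq_of_le hxa with h1 | h1
          · rcases lt_or_eq_of_le hxb with h2 | h2
            · exact absurd ⟨h1, h2⟩ hm'
            · exact Or.inr h2
          · exact Or.inl h1.symm
        simp only [hF, hg, if_neg hm]
        rcases this with rfl | rfl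
        · rw [sub_self, max_eq_right (by linarith), div_self (by linarith), Real.log_one]
        · rw [sub_self, max_eq_left (by linarith), div_self (by linarith), Real.log_one]
    have hleft : Set.EqOn F 0 (Set.uIcc 0 a) := by
      intro x hx
      rw [Set.uIcc_of_le ha0] at hx
      have : ¬ tmem x a b := by
        simp only [tmem, if_pos h]; push_neg; intro hc; exact absurd hc (not_lt.mpr hx.2)
      simp [hF, this]
    have hright : Set.EqOn F 0 (Set.uIcc b 1) := by
      intro x hx
      rw [Set.uIcc_of_le hb1.le] at hx
      have : ¬ tmem x a b := by
        simp only [tmem, if_pos h]; push_neg; intro _; linarith [hx.1]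
      simp [hF, this]
    have i1 : IntervalIntegrable F MeasureTheory.volume 0 a :=
      intInt_congr hleft intervalIntegrable_const
    have i2 : IntervalIntegrable F MeasureTheory.volume a b :=
      intInt_congr hmid (gInt a b a b h)
    have i3 : IntervalIntegrable F MeasureTheory.volume b 1 :=
      intInt_congr hright intervalIntegrable_const
    rw [← intervalIntegral.integral_add_adjacent_intervals i1 (i2.trans i3),
      ← intervalIntegral.integral_add_adjacent_intervals i2 i3,
      intervalIntegral.integral_congr hleft, intervalIntegral.integral_congr hright,
      intervalIntegral.integral_congr hmid, core a b h, htl]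
    simp
  · -- b < a
    have htl : tlen a b = b - a + 1 := if_neg (not_le.mpr h)
    have hab1 : a < b + 1 := by linarith
    set g : ℝ → ℝ := fun x => Real.log (max (x - a) ((b + 1) - x) / ((b + 1) - a)) with hg
    have hLpos : (0:ℝ) < (b + 1) - a := by linarith
    have hmid : Set.EqOn F 0 (Set.uIcc b a) := by
      intro x hx
      rw [Set.uIcc_of_le h.le] at hx
      have : ¬ tmem x a b := by
        simp only [tmem, if_neg (not_lt.mpr h.le)]; push_neg
        exact ⟨hx.2, hx.1⟩
      simp [hF, this]
    have hright : Set.EqOn F g (Set.uIcc a 1) := by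
      intro x hx
      rw [Set.uIcc_of_le ha1.le] at hx
      obtain ⟨hxa, hx1⟩ := hx
      rcases lt_or_eq_of_le hxa with h1 | h1
      · have hm : tmem x a b := by
          simp only [tmem, if_neg (not_lt.mpr h.le)]; exact Or.inl h1
        have t1 : tlen a x = x - a := if_pos h1.le
        have t2 : tlen x b = b - x + 1 := if_neg (not_le.mpr (by linarith))
        simp only [hF, hg, if_pos hm, t1, t2, htl]
        congr 2 <;> ring
      · subst h1
        have hm : ¬ tmem a a b := by
          simp only [tmem, if_neg (not_lt.mpr h.le)]; push_neg
          exact ⟨le_refl a, h.le⟩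
        simp only [hF, hg, if_neg hm]
        rw [sub_self, max_eq_right (by linarith), div_self (ne_of_gt hLpos), Real.log_one]
    have hleft : Set.EqOn F (fun x => g (x + 1)) (Set.uIcc 0 b) := by
      intro x hx
      rw [Set.uIcc_of_le hb0] at hx
      obtain ⟨hx0, hxb⟩ := hx
      rcases lt_or_eq_of_le hxb with h1 | h1
      · have hm : tmem x a b := by
          simp only [tmem, if_neg (not_lt.mpr h.le)]; exact Or.inr h1
        have t1 : tlen a x = x - a + 1 := if_neg (not_le.mpr (by linarith))
        have t2 : tlen x b = b - x := if_pos h1.le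
        simp only [hF, hg, if_pos hm, t1, t2, htl]
        congr 2 <;> ring
      · have hm : ¬ tmem x a b := by
          simp only [tmem, if_neg (not_lt.mpr h.le)]; push_neg
          exact ⟨by linarith, le_of_eq h1.symm⟩
        simp only [hF, hg, if_neg hm]
        rw [show b + 1 - (x + 1) = (0:ℝ) by rw [h1]; ring]
        rw [max_eq_left (by linarith), h1, show b + 1 - a = b + 1 - a from rfl,
          div_self (ne_of_gt hLpos), Real.log_one]
    have hgInt : ∀ c d : ℝ, IntervalIntegrable g MeasureTheory.volume c d :=
      fun c d => gInt a (b + 1) c d hab1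
    have i1 : IntervalIntegrable F MeasureTheory.volume 0 b := by
      apply intInt_congr hleft
      apply ContinuousOn.intervalIntegrable
      apply ContinuousOn.log
      · exact ((((continuous_id.add continuous_const).sub continuous_const).max
          (continuous_const.sub (continuous_id.add continuous_const))).div_const _).continuousOn
      · intro x _
        exact ne_of_gt (div_pos (max_pos_aux hab1) hLpos)
    have i2 : IntervalIntegrable F MeasureTheory.volume b a :=
      intInt_congr hmid intervalIntegrable_const
    have i3 : IntervalIntegrable F MeasureTheory.volume a 1 :=
      intInt_congr hright (hgInt a 1)
    rw [← intervalIntegral.integral_add_adjacent_intervals i1 (i2.trans i3),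
      ← intervalIntegral.integral_add_adjacent_intervals i2 i3,
      intervalIntegral.integral_congr hmid, intervalIntegral.integral_congr hright,
      intervalIntegral.integral_congr hleft]
    rw [intervalIntegral.integral_comp_add_right g 1, zero_add]
    have hadd : (∫ x in a..(1:ℝ), g x) + ∫ x in (1:ℝ)..(b+1), g x = ∫ x in a..(b+1), g x :=
      intervalIntegral.integral_add_adjacent_intervals (hgInt a 1) (hgInt 1 (b+1))
    have hcore' : (∫ x in a..(b+1), g x) = (Real.log 2 - 1) * ((b + 1) - a) := core a (b + 1) hab1
    simp only [Pi.zero_apply, intervalIntegral.integral_zero]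
    rw [htl, show b - a + 1 = b + 1 - a from by ring]
    linarith [hadd, hcore']
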